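/- In the group G = F_2^{n-1} ⋊_φ D_{2n} with generators ρ_0 = (0,h_0), ρ_1 = (0,h_1), ρ_2 = ((0,...,0,1)^T, h_0), there exists an involutory group automorphism δ of G with δ(ρ_0) = ρ_2, δ(ρ_1) = ρ_1, and δ(ρ_2) = ρ_0; hence the associated regular 3-polytope is self-dual. -/

import Mathlib

open Matrix DihedralGroup

/-- The matrix `U` of Lemma 3: (0-indexed) row `i` has a 1 at column `n-3-i` for
`i ≤ n-3`, and the last row is all ones. -/
def Umat (n : ℕ) : Matrix (Fin (n-1)) (Fin (n-1)) (ZMod 2) :=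
  Matrix.of fun i j =>
    if (i : ℕ) = n - 2 then 1 else if (i : ℕ) + (j : ℕ) = n - 3 then 1 else 0

/-- The anti-diagonal permutation matrix `V` of Lemma 3. -/
def Vmat (n : ℕ) : Matrix (Fin (n-1)) (Fin (n-1)) (ZMod 2) :=
  Matrix.of fun i j => if (i : ℕ) + (j : ℕ) = n - 2 then 1 else 0

/-- u = (0,…,0,1)ᵀ ∈ F₂^{n-1}. -/
def uVec (n : ℕ) : Fin (n-1) → ZMod 2 := fun i => if (i : ℕ) = n - 2 then 1 else 0

/-- v = Vu = (1,0,…,0)ᵀ ∈ F₂^{n-1}. -/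
def vVec (n : ℕ) : Fin (n-1) → ZMod 2 := fun i => if (i : ℕ) = 0 then 1 else 0

/-- The multiplicative group structure that `AddAut A` carried in the older Mathlib. -/
instance AddAut.oldMulGroup (A : Type*) [Add A] : Group (AddAut A) where
  mul g h := AddEquiv.trans h g
  one := AddEquiv.refl _
  inv := AddEquiv.symm
  mul_assoc _ _ _ := rfl
  one_mul _ := rfl
  mul_one _ := rfl
  inv_mul_cancel := AddEquiv.self_trans_symm

@[simp]
theorem AddAut.oldMulGroup_one_apply {A : Type*} [Add A] (a : A) : (1 : AddAut A) a = a :=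
  rfl

@[simp]
theorem AddAut.oldMulGroup_mul_apply {A : Type*} [Add A] (e₁ e₂ : AddAut A) (a : A) :
    (e₁ * e₂) a = e₁ (e₂ a) :=
  rfl

/-- The action of `D_{2n}` on `F₂^{n-1}` (written multiplicatively) induced by a
representation `φ : D_{2n} → Aut(F₂^{n-1})`. -/
def dihAct (n : ℕ) (φ : DihedralGroup n →* AddAut (Fin (n-1) → ZMod 2)) :
    DihedralGroup n →* MulAut (Multiplicative (Fin (n-1) → ZMod 2)) where
  toFun x := AddEquiv.toMultiplicative (φ x)
  map_one' := by ext w; simp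
  map_mul' x y := by ext w; simp

/-- The semidirect product `G = F₂^{n-1} ⋊_φ D_{2n}`. -/
abbrev Gsd (n : ℕ) (φ : DihedralGroup n →* AddAut (Fin (n-1) → ZMod 2)) :=
  Multiplicative (Fin (n-1) → ZMod 2) ⋊[dihAct n φ] DihedralGroup n

/-- `ρ₀ = (0, h₀)`, where `h₀ = sr 0`. -/
def rho0 (n : ℕ) (φ : DihedralGroup n →* AddAut (Fin (n-1) → ZMod 2)) : Gsd n φ :=
  ⟨Multiplicative.ofAdd 0, sr 0⟩

/-- `ρ₁ = (0, h₁)`, where `h₁ = sr 1`. -/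
def rho1 (n : ℕ) (φ : DihedralGroup n →* AddAut (Fin (n-1) → ZMod 2)) : Gsd n φ :=
  ⟨Multiplicative.ofAdd 0, sr 1⟩

/-- `ρ₂ = (u, h₀)`, where `u = (0,…,0,1)ᵀ`. -/
def rho2 (n : ℕ) (φ : DihedralGroup n →* AddAut (Fin (n-1) → ZMod 2)) : Gsd n φ :=
  ⟨Multiplicative.ofAdd (uVec n), sr 0⟩

namespace SelfDualAux

/-- Indicator vector indexed by `ZMod n`. -/
def E (n : ℕ) (t : ZMod n) : Fin (n-1) → ZMod 2 :=
  fun i => if ((i : ℕ) : ZMod n) = t then 1 else 0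

lemma two_cancel {n : ℕ} (x : Fin (n-1) → ZMod 2) : x + x = 0 := by
  funext i; exact CharTwo.add_self_eq_zero _

lemma Ecalc {n : ℕ} (A B : ZMod n) : E n B + (E n A + E n B) = E n A := by
  have h : E n B + (E n A + E n B) = E n A + (E n B + E n B) := by abel
  rw [h, two_cancel, add_zero]

lemma Ecalc2 {n : ℕ} (x y a : Fin (n-1) → ZMod 2) : (x + a) + (y + a) = x + y := by
  have h : (x + a) + (y + a) = (x + y) + (a + a) := by abel
  rw [h, two_cancel, add_zero]

variable {n : ℕ}

lemma cast_eq_zero_iff (hn : 3 ≤ n) (a : ℕ) (h1 : 1 ≤ a) (h2 : a ≤ 2*n - 1) :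
    ((a : ZMod n) = 0) ↔ a = n := by
  haveI : NeZero n := ⟨by omega⟩
  rw [ZMod.natCast_eq_zero_iff]
  constructor
  · intro h
    exact Nat.eq_of_dvd_of_lt_two_mul (by omega) h (by omega)
  · rintro rfl; exact ⟨1, by ring⟩

lemma E_neg_one (hn : 3 ≤ n) : E n (-1) = 0 := by
  funext i
  have hi := i.2
  have h : ¬ (((i : ℕ) : ZMod n) = -1) := by
    rw [show (-1 : ZMod n) = -((1:ℕ) : ZMod n) by push_cast; ring,
      eq_neg_iff_add_eq_zero, ← Nat.cast_add,
      cast_eq_zero_iff hn _ (by omega) (by omega)]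
    omega
  simp only [E, if_neg h]
  rfl

lemma E_neg_two (hn : 3 ≤ n) : E n (-2) = uVec n := by
  funext i
  have hi := i.2
  have h : (((i : ℕ) : ZMod n) = -2) ↔ ((i : ℕ) = n - 2) := by
    rw [show (-2 : ZMod n) = -((2:ℕ) : ZMod n) by push_cast; ring,
      eq_neg_iff_add_eq_zero, ← Nat.cast_add,
      cast_eq_zero_iff hn _ (by omega) (by omega)]
    omega
  simp only [E, uVec, h]

lemma mulVec_single {m : ℕ} (M : Matrix (Fin m) (Fin m) (ZMod 2)) (s : Fin m) :
    M.mulVec (fun j => if j = s then 1 else 0) = fun i => M i s := by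
  funext i
  simp [Matrix.mulVec, dotProduct, mul_ite, mul_one, mul_zero]

lemma E_nat (hn : 3 ≤ n) (k : ℕ) (hk : k < n - 1) :
    E n (k : ZMod n) = fun j : Fin (n-1) => if j = ⟨k, hk⟩ then 1 else 0 := by
  haveI : NeZero n := ⟨by omega⟩
  funext j
  have hj := j.2
  have h : (((j : ℕ) : ZMod n) = (k : ZMod n)) ↔ (j = (⟨k, hk⟩ : Fin (n-1))) := by
    rw [Fin.ext_iff]
    constructor
    · intro h
      have := congrArg ZMod.val h
      rwa [ZMod.val_cast_of_lt (by omega : (j:ℕ) < n),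
        ZMod.val_cast_of_lt (by omega : k < n)] at this
    · intro h; rw [h]
  simp only [E, h]

lemma t_cases (hn : 3 ≤ n) (t : ZMod n) :
    t = -1 ∨ ∃ k : ℕ, k < n - 1 ∧ t = (k : ZMod n) := by
  haveI : NeZero n := ⟨by omega⟩
  have hlt := ZMod.val_lt t
  by_cases ht : t.val < n - 1
  · exact Or.inr ⟨t.val, ht, (ZMod.natCast_zmod_val t).symm⟩
  · left
    have hv : t.val = n - 1 := by omega
    rw [← ZMod.natCast_zmod_val t, hv,
      show (-1 : ZMod n) = -((1:ℕ) : ZMod n) by push_cast; ring,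
      eq_neg_iff_add_eq_zero, ← Nat.cast_add,
      cast_eq_zero_iff hn _ (by omega) (by omega)]
    omega

lemma EU (hn : 3 ≤ n) (t : ZMod n) :
    (Umat n).mulVec (E n t) = E n (-3 - t) + E n (-2) := by
  haveI : NeZero n := ⟨by omega⟩
  rcases t_cases hn t with rfl | ⟨k, hk, rfl⟩
  · rw [E_neg_one hn, Matrix.mulVec_zero,
      show (-3 - (-1) : ZMod n) = -2 by ring]
    exact (two_cancel _).symm
  · rw [E_nat hn k hk, mulVec_single]
    funext i
    have hi := i.2
    have hc2 : (((i:ℕ) : ZMod n) = -2) ↔ ((i:ℕ) = n - 2) := by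
      rw [show (-2 : ZMod n) = -((2:ℕ) : ZMod n) by push_cast; ring,
        eq_neg_iff_add_eq_zero, ← Nat.cast_add,
        cast_eq_zero_iff hn _ (by omega) (by omega)]
      omega
    have hc3 : (((i:ℕ) : ZMod n) = -3 - (k : ZMod n)) ↔ ((i:ℕ) + k = n - 3) := by
      rw [show (-3 - (k : ZMod n) : ZMod n) = -(((3 + k : ℕ) : ZMod n)) by push_cast; ring,
        eq_neg_iff_add_eq_zero, ← Nat.cast_add,
        cast_eq_zero_iff hn _ (by omega) (by omega)]
      omega
    simp only [Umat, E, Matrix.of_apply, Pi.add_apply, hc2, hc3]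
    split_ifs <;> first | omega | simp

lemma EV (hn : 3 ≤ n) (t : ZMod n) :
    (Vmat n).mulVec (E n t) = E n (-2 - t) := by
  haveI : NeZero n := ⟨by omega⟩
  rcases t_cases hn t with rfl | ⟨k, hk, rfl⟩
  · rw [E_neg_one hn, Matrix.mulVec_zero,
      show (-2 - (-1) : ZMod n) = -1 by ring, E_neg_one hn]
  · rw [E_nat hn k hk, mulVec_single]
    funext i
    have hi := i.2
    have hc : (((i:ℕ) : ZMod n) = -2 - (k : ZMod n)) ↔ ((i:ℕ) + k = n - 2) := by
      rw [show (-2 - (k : ZMod n) : ZMod n) = -(((2 + k : ℕ) : ZMod n)) by push_cast; ring,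
        eq_neg_iff_add_eq_zero, ← Nat.cast_add,
        cast_eq_zero_iff hn _ (by omega) (by omega)]
      omega
    simp only [Vmat, E, Matrix.of_apply, hc]


section Phi

variable {n : ℕ} (hn : 3 ≤ n)
variable (φ : DihedralGroup n →* AddAut (Fin (n-1) → ZMod 2))
variable (hφ0 : ∀ w, φ (sr 0) w = (Umat n).mulVec w)
variable (hφ1 : ∀ w, φ (sr 1) w = (Vmat n).mulVec w)

include hn hφ0 in
lemma phi_sr0_E (t : ZMod n) : φ (sr 0) (E n t) = E n (-3 - t) + E n (-2) := by
  rw [hφ0, EU hn]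

include hn hφ1 in
lemma phi_sr1_E (t : ZMod n) : φ (sr 1) (E n t) = E n (-2 - t) := by
  rw [hφ1, EV hn]

include hn hφ0 hφ1 in
lemma phi_r1_E (t : ZMod n) : φ (r 1) (E n t) = E n (t - 1) + E n (-2) := by
  have h : (r 1 : DihedralGroup n) = sr 0 * sr 1 := by
    rw [DihedralGroup.sr_mul_sr]; norm_num
  rw [h, _root_.map_mul, AddAut.oldMulGroup_mul_apply, phi_sr1_E hn φ hφ1, phi_sr0_E hn φ hφ0,
    show (-3 - (-2 - t) : ZMod n) = t - 1 by ring]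

include hn hφ0 hφ1 in
lemma phi_r1_pow_E (k : ℕ) (t : ZMod n) :
    φ ((r 1 : DihedralGroup n) ^ k) (E n t) = E n (t - k) + E n (-1 - k) := by
  induction k generalizing t with
  | zero =>
    simp only [pow_zero, _root_.map_one, AddAut.oldMulGroup_one_apply, Nat.cast_zero, sub_zero]
    rw [E_neg_one hn, add_zero]
  | succ k ih =>
    rw [pow_succ, _root_.map_mul, AddAut.oldMulGroup_mul_apply, phi_r1_E hn φ hφ0 hφ1, _root_.map_add, ih, ih,
      show (t - 1 - (k : ZMod n)) = t - ((k:ℕ)+1 : ℕ) by push_cast; ring,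
      show (-2 - (k : ZMod n)) = -1 - ((k:ℕ)+1 : ℕ) by push_cast; ring]
    exact Ecalc2 _ _ _

include hn hφ0 hφ1 in
lemma phi_r_E (j t : ZMod n) : φ (r j) (E n t) = E n (t - j) + E n (-1 - j) := by
  haveI : NeZero n := ⟨by omega⟩
  have h : (r j : DihedralGroup n) = (r 1) ^ j.val := by
    rw [DihedralGroup.r_one_pow, ZMod.natCast_zmod_val]
  rw [h, phi_r1_pow_E hn φ hφ0 hφ1, ZMod.natCast_zmod_val]

include hn hφ0 hφ1 in
lemma phi_sr_E (j t : ZMod n) : φ (sr j) (E n t) = E n (j - t - 3) + E n (j - 2) := by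
  have h : (sr j : DihedralGroup n) = sr 0 * r j := by
    rw [DihedralGroup.sr_mul_r, zero_add]
  rw [h, _root_.map_mul, AddAut.oldMulGroup_mul_apply, phi_r_E hn φ hφ0 hφ1, _root_.map_add,
    phi_sr0_E hn φ hφ0, phi_sr0_E hn φ hφ0,
    show (-3 - (t - j) : ZMod n) = j - t - 3 by ring,
    show (-3 - (-1 - j) : ZMod n) = j - 2 by ring]
  exact Ecalc2 _ _ _

/-- The 1-cocycle `c`. -/
def cfun (n : ℕ) : DihedralGroup n → (Fin (n-1) → ZMod 2)
  | DihedralGroup.r k => E n (-k - 1)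
  | DihedralGroup.sr k => E n (k - 2)

include hn hφ0 hφ1 in
lemma cocycle (x y : DihedralGroup n) :
    cfun n (x * y) = cfun n x + φ x (cfun n y) := by
  rcases x with j | j <;> rcases y with k | k <;>
    simp only [DihedralGroup.r_mul_r, DihedralGroup.r_mul_sr,
      DihedralGroup.sr_mul_r, DihedralGroup.sr_mul_sr, cfun]
  · rw [phi_r_E hn φ hφ0 hφ1,
      show (-k - 1 - j : ZMod n) = -(j + k) - 1 by ring,
      show (-1 - j : ZMod n) = -j - 1 by ring]
    exact (Ecalc _ _).symm
  · rw [phi_r_E hn φ hφ0 hφ1,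
      show (k - 2 - j : ZMod n) = k - j - 2 by ring,
      show (-1 - j : ZMod n) = -j - 1 by ring]
    exact (Ecalc _ _).symm
  · rw [phi_sr_E hn φ hφ0 hφ1,
      show (j - (-k - 1) - 3 : ZMod n) = j + k - 2 by ring]
    exact (Ecalc _ _).symm
  · rw [phi_sr_E hn φ hφ0 hφ1,
      show (j - (k - 2) - 3 : ZMod n) = -(k - j) - 1 by ring]
    exact (Ecalc _ _).symm

end Phi

end SelfDualAux

/-- There exists an involutory group automorphism δ of G with δ(ρ0) = ρ2, δ(ρ1) = ρ1 and δ(ρ2) = ρ0; hence the associated regular 3-polytope is self-dual. -/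
theorem stmt_19 (n : ℕ) (hn : 3 ≤ n)
    (φ : DihedralGroup n →* AddAut (Fin (n-1) → ZMod 2))
    (hφ0 : ∀ w, φ (sr 0) w = (Umat n).mulVec w)
    (hφ1 : ∀ w, φ (sr 1) w = (Vmat n).mulVec w) :
    ∃ δ : MulAut (Gsd n φ), δ * δ = 1 ∧
      δ (rho0 n φ) = rho2 n φ ∧ δ (rho1 n φ) = rho1 n φ ∧ δ (rho2 n φ) = rho0 n φ := by
  classical
  have hcoc := SelfDualAux.cocycle hn φ hφ0 hφ1
  set c := SelfDualAux.cfun n with hc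
  -- the underlying function of δ
  set F : Gsd n φ → Gsd n φ :=
    fun g => ⟨g.left * Multiplicative.ofAdd (c g.right), g.right⟩ with hF
  have hact : ∀ (x : DihedralGroup n) (m : Multiplicative (Fin (n-1) → ZMod 2)),
      dihAct n φ x m = Multiplicative.ofAdd (φ x (Multiplicative.toAdd m)) :=
    fun _ _ => rfl
  have hFF : ∀ g, F (F g) = g := by
    intro g
    refine SemidirectProduct.ext ?_ rfl
    show g.left * Multiplicative.ofAdd (c g.right) * Multiplicative.ofAdd (c g.right) = g.left
    rw [mul_assoc, ← ofAdd_add, SelfDualAux.two_cancel, ofAdd_zero, mul_one]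
  have hmul : ∀ g h : Gsd n φ, F (g * h) = F g * F h := by
    intro g h
    refine SemidirectProduct.ext ?_ rfl
    show (g * h).left * Multiplicative.ofAdd (c ((g * h).right))
        = (F g).left * dihAct n φ (F g).right (F h).left
    apply Multiplicative.toAdd.injective
    simp only [hF, SemidirectProduct.mul_left, SemidirectProduct.mul_right, hact,
      toAdd_mul, toAdd_ofAdd, hcoc, _root_.map_add]
    abel
  refine ⟨{ toFun := F, invFun := F, left_inv := hFF, right_inv := hFF,
            map_mul' := hmul }, ?_, ?_, ?_, ?_⟩
  · refine MulEquiv.ext fun g => ?_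
    rw [MulAut.mul_apply, MulAut.one_apply]
    exact hFF g
  · show F (rho0 n φ) = rho2 n φ
    refine SemidirectProduct.ext ?_ rfl
    show Multiplicative.ofAdd 0 * Multiplicative.ofAdd (c (sr 0))
        = Multiplicative.ofAdd (uVec n)
    have h0 : c (sr 0) = uVec n := by
      show SelfDualAux.E n (0 - 2) = uVec n
      rw [zero_sub, SelfDualAux.E_neg_two hn]
    rw [h0, ← ofAdd_add, zero_add]
  · show F (rho1 n φ) = rho1 n φ
    refine SemidirectProduct.ext ?_ rfl
    show Multiplicative.ofAdd 0 * Multiplicative.ofAdd (c (sr 1))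
        = Multiplicative.ofAdd 0
    have h1 : c (sr 1) = 0 := by
      show SelfDualAux.E n (1 - 2) = 0
      rw [show ((1 : ZMod n) - 2 : ZMod n) = -1 by ring, SelfDualAux.E_neg_one hn]
    rw [h1, ← ofAdd_add, add_zero]
  · show F (rho2 n φ) = rho0 n φ
    refine SemidirectProduct.ext ?_ rfl
    show Multiplicative.ofAdd (uVec n) * Multiplicative.ofAdd (c (sr 0))
        = Multiplicative.ofAdd 0
    have h0 : c (sr 0) = uVec n := by
      show SelfDualAux.E n (0 - 2) = uVec n
      rw [zero_sub, SelfDualAux.E_neg_two hn]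
    rw [h0, ← ofAdd_add, SelfDualAux.two_cancel]
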